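/- arXiv:2009.00650 — 2 statements merged into one kernel-verified Lean document; each statement's English description precedes it below -/
import Mathlib

section
/- Let G_n(q,t) = SB_n(13/2, 123; q,t) be the joint generating function of spread and block over partitions of [n] avoiding 13/2 and 123. Then G₀ = 1, G₁ = t, and G_n = t·G_{n-1} + q·t·G_{n-2} for n ≥ 2. In particular |Π_n(13/2,123)| is the n-th Fibonacci number. -/
open scoped Classical
noncomputable section

/-- A set partition of `[n]` is modeled as a setoid (equivalence relation) on `Fin n`. -/
abbrev SetPartition (n : ℕ) := Setoid (Fin n)

/-- Pattern containment for set partitions: `P` contains `Q` if there is a strictly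
increasing map along which the block structure of `Q` is induced by that of `P`. -/
def SPContains {n k : ℕ} (P : SetPartition n) (Q : SetPartition k) : Prop :=
  ∃ f : Fin k → Fin n, StrictMono f ∧ ∀ a b : Fin k, Q.r a b ↔ P.r (f a) (f b)

def SPAvoids {n k : ℕ} (P : SetPartition n) (Q : SetPartition k) : Prop :=
  ¬ SPContains P Q

noncomputable instance instFintypeSetoidFin (n : ℕ) : Fintype (SetPartition n) :=
  Fintype.ofInjective (fun P => P.r) fun P Q h => Setoid.ext fun a b => by simp only at h; rw [show P.r = Q.r from h]

/-- The (0-based) minimum of the block containing `i`. -/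
def blockMin {n : ℕ} (P : SetPartition n) (i : Fin n) : ℕ :=
  sInf {j : ℕ | ∃ h : j < n, P.r ⟨j, h⟩ i}

/-- The (0-based) maximum of the block containing `i`. -/
def blockMax {n : ℕ} (P : SetPartition n) (i : Fin n) : ℕ :=
  sSup {j : ℕ | ∃ h : j < n, P.r ⟨j, h⟩ i}

/-- The spread statistic: the sum over blocks of (max − min). -/
def spread {n : ℕ} (P : SetPartition n) : ℕ :=
  ∑ i ∈ Finset.univ.filter (fun i : Fin n => blockMin P i = (i : ℕ)),
    (blockMax P i - (i : ℕ))

/-- The number of blocks. -/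
def blockNum {n : ℕ} (P : SetPartition n) : ℕ :=
  (Finset.univ.image (fun i : Fin n => Quotient.mk P i)).card

/-- The restricted growth function of a partition: `rgf P i` is the index (starting
from 1) of the block of `i` when the blocks are listed in order of their minima. -/
def rgf {n : ℕ} (P : SetPartition n) (i : Fin n) : ℕ :=
  (Finset.univ.filter (fun j : Fin n => blockMin P j = (j : ℕ) ∧ (j : ℕ) ≤ blockMin P i)).card

/-- `w : Fin n → ℕ` is a restricted growth function. -/
def IsRGF {n : ℕ} (w : Fin n → ℕ) : Prop :=
  ∀ i : Fin n, 1 ≤ w i ∧ w i ≤ (Finset.univ.filter (fun j : Fin n => j < i)).sup w + 1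

/-- patterns -/
def p123 : SetPartition 3 := Setoid.ker ![0, 0, 0]
def p1_2_3 : SetPartition 3 := Setoid.ker ![0, 1, 2]
def p13_2 : SetPartition 3 := Setoid.ker ![0, 1, 0]
def p12_3 : SetPartition 3 := Setoid.ker ![0, 0, 1]
def p1_23 : SetPartition 3 := Setoid.ker ![0, 1, 1]
def p13_24 : SetPartition 4 := Setoid.ker ![0, 1, 0, 1]


/-- The joint generating function of spread and block over partitions of `[n]`
avoiding both patterns `Q₁` and `Q₂`. -/
def SB2 {k₁ k₂ : ℕ} (n : ℕ) (Q₁ : SetPartition k₁) (Q₂ : SetPartition k₂) (q t : ℚ) : ℚ :=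
  ∑ P ∈ Finset.univ.filter
      (fun P : SetPartition n => SPAvoids P Q₁ ∧ SPAvoids P Q₂),
    q ^ spread P * t ^ blockNum P


namespace SBAux

open Finset

/-- sparse subsets of `{0,…,n-2}`: encodes class partitions. -/
def Sparse (n : ℕ) : Finset (Finset ℕ) :=
  (Finset.range (n - 1)).powerset.filter (fun S => ∀ i ∈ S, i + 1 ∉ S)

lemma mem_Sparse {n : ℕ} {S : Finset ℕ} :
    S ∈ Sparse n ↔ (∀ p ∈ S, p < n - 1) ∧ ∀ i ∈ S, i + 1 ∉ S := by
  simp [Sparse, Finset.subset_iff, Finset.mem_range]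

/-- a "sparsified" version of `S`, used to make `toP` total. -/
def spar (n : ℕ) (S : Finset ℕ) : Finset ℕ :=
  S.filter (fun i => i + 1 ∉ S ∧ i + 1 < n)

lemma spar_spars {n : ℕ} (S : Finset ℕ) : ∀ i ∈ spar n S, i + 1 ∉ spar n S := by
  intro i hi hsi
  have h1 := (Finset.mem_filter.mp hi).2.1
  exact h1 (Finset.mem_filter.mp hsi).1

lemma spar_lt {n : ℕ} {S : Finset ℕ} {i : ℕ} (hi : i ∈ spar n S) : i + 1 < n :=
  (Finset.mem_filter.mp hi).2.2

lemma spar_eq {n : ℕ} {S : Finset ℕ} (hS : S ∈ Sparse n) : spar n S = S := by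
  rw [mem_Sparse] at hS
  ext i
  simp only [spar, Finset.mem_filter]
  constructor
  · tauto
  · intro hi
    refine ⟨hi, hS.2 i hi, ?_⟩
    have := hS.1 i hi
    omega

/-- the partition associated to a (sparse) subset. -/
def toP (n : ℕ) (S : Finset ℕ) : SetPartition n where
  r i j := i = j ∨ ((i : ℕ) + 1 = (j : ℕ) ∧ (i : ℕ) ∈ spar n S) ∨
    ((j : ℕ) + 1 = (i : ℕ) ∧ (j : ℕ) ∈ spar n S)
  iseqv := by
    constructor
    · intro x; exact Or.inl rfl
    · intro x y h; tauto
    · intro x y z hxy hyz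
      rcases hxy with rfl | ⟨h1, h2⟩ | ⟨h1, h2⟩
      · exact hyz
      · rcases hyz with rfl | ⟨h3, h4⟩ | ⟨h3, h4⟩
        · exact Or.inr (Or.inl ⟨h1, h2⟩)
        · exact absurd (h1 ▸ h4) (spar_spars S _ h2)
        · exact Or.inl (Fin.ext (by omega))
      · rcases hyz with rfl | ⟨h3, h4⟩ | ⟨h3, h4⟩
        · exact Or.inr (Or.inr ⟨h1, h2⟩)
        · exact Or.inl (Fin.ext (by omega))
        · exact absurd (h3 ▸ h2) (spar_spars S _ h4)

lemma toP_r_iff {n : ℕ} {S : Finset ℕ} (i j : Fin n) :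
    (toP n S).r i j ↔ (i = j ∨ ((i : ℕ) + 1 = (j : ℕ) ∧ (i : ℕ) ∈ spar n S) ∨
      ((j : ℕ) + 1 = (i : ℕ) ∧ (j : ℕ) ∈ spar n S)) := Iff.rfl

/-- the subset associated to a partition. -/
def toS {n : ℕ} (P : SetPartition n) : Finset ℕ :=
  (Finset.range (n - 1)).filter
    (fun p => ∃ h : p + 1 < n, P.r ⟨p, Nat.lt_of_succ_lt h⟩ ⟨p + 1, h⟩)

/-- the structural characterization of avoiding partitions. -/
def Good {n : ℕ} (P : SetPartition n) : Prop :=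
  ∀ i j : Fin n, i < j → P.r i j →
    (j : ℕ) = (i : ℕ) + 1 ∧ ∀ k : Fin n, j < k → ¬ P.r i k


lemma strictMono_triple {n : ℕ} {i j k : Fin n} (hij : i < j) (hjk : j < k) :
    StrictMono ![i, j, k] := by
  intro a b hab
  fin_cases a <;> fin_cases b <;>
    simp_all [Matrix.cons_val_zero, Matrix.cons_val_one, Matrix.head_cons] <;>
    first
      | exact hij | exact hjk | exact hij.trans hjk
      | exact absurd hab (by decide +kernel)

lemma contains123 {n : ℕ} {P : SetPartition n} {i j k : Fin n} (hij : i < j) (hjk : j < k)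
    (h1 : P.r i j) (h2 : P.r j k) : SPContains P p123 := by
  refine ⟨![i, j, k], strictMono_triple hij hjk, ?_⟩
  have h3 : P.r i k := P.iseqv.trans h1 h2
  have e : ∀ a b : Fin n, P.r a b → P.r b a := fun a b h => P.iseqv.symm h
  intro a b
  fin_cases a <;> fin_cases b <;>
    simp only [Matrix.cons_val_zero, Matrix.cons_val_one, Matrix.head_cons,
      Matrix.cons_val_two, Matrix.tail_cons] <;>
    refine iff_of_true rfl ?_ <;>
    first
      | exact P.iseqv.refl _ | exact h1 | exact h2 | exact h3
      | exact e _ _ h1 | exact e _ _ h2 | exact e _ _ h3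

lemma contains13_2 {n : ℕ} {P : SetPartition n} {i j k : Fin n} (hij : i < j) (hjk : j < k)
    (h1 : P.r i k) (h2 : ¬ P.r i j) : SPContains P p13_2 := by
  refine ⟨![i, j, k], strictMono_triple hij hjk, ?_⟩
  have h3 : ¬ P.r j k := fun h => h2 (P.iseqv.trans h1 (P.iseqv.symm h))
  have h2' : ¬ P.r j i := fun h => h2 (P.iseqv.symm h)
  have h3' : ¬ P.r k j := fun h => h3 (P.iseqv.symm h)
  intro a b
  fin_cases a <;> fin_cases b <;>
    simp only [Matrix.cons_val_zero, Matrix.cons_val_one, Matrix.head_cons,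
      Matrix.cons_val_two, Matrix.tail_cons]
  · exact iff_of_true rfl (P.iseqv.refl _)
  · exact iff_of_false (fun h => by have := (Setoid.ker_def (f := ![(0:ℕ), 1, 0])).mp h; simp at this) h2
  · exact iff_of_true rfl h1
  · exact iff_of_false (fun h => by have := (Setoid.ker_def (f := ![(0:ℕ), 1, 0])).mp h; simp at this) h2'
  · exact iff_of_true rfl (P.iseqv.refl _)
  · exact iff_of_false (fun h => by have := (Setoid.ker_def (f := ![(0:ℕ), 1, 0])).mp h; simp at this) h3
  · exact iff_of_true rfl (P.iseqv.symm h1)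
  · exact iff_of_false (fun h => by have := (Setoid.ker_def (f := ![(0:ℕ), 1, 0])).mp h; simp at this) h3'
  · exact iff_of_true rfl (P.iseqv.refl _)

lemma mem_class_iff {n : ℕ} {P : SetPartition n} :
    (SPAvoids P p13_2 ∧ SPAvoids P p123) ↔ Good P := by
  constructor
  · intro ⟨hA, hB⟩ i j hij hr
    by_cases hadj : (j : ℕ) = (i : ℕ) + 1
    · refine ⟨hadj, fun k hjk hik => ?_⟩
      exact hB (contains123 hij hjk hr (P.iseqv.trans (P.iseqv.symm hr) hik))
    · exfalso
      have hm : (i : ℕ) + 1 < n := by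
        have := j.isLt
        have := hij
        rw [Fin.lt_def] at this
        omega
      set m : Fin n := ⟨(i : ℕ) + 1, hm⟩ with hmdef
      have him : i < m := by rw [Fin.lt_def]; simp [hmdef]
      have hmj : m < j := by
        rw [Fin.lt_def] at hij ⊢
        simp only [hmdef]
        omega
      by_cases hrim : P.r i m
      · exact hB (contains123 him hmj hrim (P.iseqv.trans (P.iseqv.symm hrim) hr))
      · exact hA (contains13_2 him hmj hr hrim)
  · intro hG
    constructor
    · rintro ⟨f, hf, hpat⟩
      have h02 : P.r (f 0) (f 2) := (hpat 0 2).mp rfl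
      have h01 := (hG (f 0) (f 2) (hf (by decide)) h02).1
      have l1 : f 0 < f 1 := hf (by decide)
      have l2 : f 1 < f 2 := hf (by decide)
      rw [Fin.lt_def] at l1 l2
      omega
    · rintro ⟨f, hf, hpat⟩
      have h01 : P.r (f 0) (f 1) := (hpat 0 1).mp rfl
      have h02 : P.r (f 0) (f 2) := (hpat 0 2).mp rfl
      exact (hG (f 0) (f 1) (hf (by decide)) h01).2 (f 2) (hf (by decide)) h02

lemma good_toP (n : ℕ) (S : Finset ℕ) : Good (toP n S) := by
  intro i j hij hr
  rcases hr with rfl | ⟨h1, h2⟩ | ⟨h1, h2⟩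
  · exact absurd hij (lt_irrefl _)
  · refine ⟨h1.symm, fun k hjk hik => ?_⟩
    rw [Fin.lt_def] at hjk
    rcases hik with rfl | ⟨h3, h4⟩ | ⟨h3, h4⟩
    · omega
    · omega
    · rw [Fin.lt_def] at hij; omega
  · rw [Fin.lt_def] at hij; omega

lemma mem_toS {n : ℕ} {P : SetPartition n} {p : ℕ} :
    p ∈ toS P ↔ p + 1 < n ∧ ∃ h : p + 1 < n, P.r ⟨p, Nat.lt_of_succ_lt h⟩ ⟨p + 1, h⟩ := by
  simp only [toS, Finset.mem_filter, Finset.mem_range]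
  constructor
  · rintro ⟨h1, h2, h3⟩; exact ⟨h2, h2, h3⟩
  · rintro ⟨h1, h2, h3⟩; exact ⟨by omega, h2, h3⟩

lemma toS_mem_Sparse {n : ℕ} {P : SetPartition n} (hG : Good P) : toS P ∈ Sparse n := by
  rw [mem_Sparse]
  constructor
  · intro p hp
    rw [mem_toS] at hp
    omega
  · intro p hp hp1
    rw [mem_toS] at hp hp1
    obtain ⟨h1, h2, h3⟩ := hp
    obtain ⟨h4, h5, h6⟩ := hp1
    have hlt : (⟨p, by omega⟩ : Fin n) < ⟨p + 1, h2⟩ := Fin.mk_lt_mk.mpr (Nat.lt_succ_self p)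
    have := (hG _ _ hlt h3).2 ⟨p + 2, h5⟩ (by rw [Fin.lt_def]; exact Nat.lt_succ_self _)
    exact this (P.iseqv.trans h3 h6)

lemma spar_toS {n : ℕ} {P : SetPartition n} (hG : Good P) : spar n (toS P) = toS P :=
  spar_eq (toS_mem_Sparse hG)

lemma toP_toS {n : ℕ} {P : SetPartition n} (hG : Good P) : toP n (toS P) = P := by
  apply Setoid.ext
  intro a b
  rw [toP_r_iff, spar_toS hG]
  constructor
  · rintro (rfl | ⟨h1, h2⟩ | ⟨h1, h2⟩)
    · exact P.iseqv.refl a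
    · rw [mem_toS] at h2
      obtain ⟨h3, h4, h5⟩ := h2
      have ea : (⟨(a : ℕ), _⟩ : Fin n) = a := rfl
      have eb : (⟨(a : ℕ) + 1, h4⟩ : Fin n) = b := Fin.ext h1
      rw [ea, eb] at h5
      exact h5
    · rw [mem_toS] at h2
      obtain ⟨h3, h4, h5⟩ := h2
      have ea : (⟨(b : ℕ), _⟩ : Fin n) = b := rfl
      have eb : (⟨(b : ℕ) + 1, h4⟩ : Fin n) = a := Fin.ext h1
      rw [ea, eb] at h5
      exact P.iseqv.symm h5
  · intro hr
    rcases lt_trichotomy a b with hab | rfl | hab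
    · have h1 := (hG a b hab hr).1
      right; left
      refine ⟨h1.symm, ?_⟩
      rw [mem_toS]
      have hb := b.isLt
      refine ⟨by omega, by omega, ?_⟩
      have ea : (⟨(a : ℕ), _⟩ : Fin n) = a := rfl
      have eb : (⟨(a : ℕ) + 1, by omega⟩ : Fin n) = b := Fin.ext h1.symm
      rw [ea, eb]
      exact hr
    · exact Or.inl rfl
    · have h1 := (hG b a hab (P.iseqv.symm hr)).1
      right; right
      refine ⟨h1.symm, ?_⟩
      rw [mem_toS]
      have ha := a.isLt
      refine ⟨by omega, by omega, ?_⟩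
      have ea : (⟨(b : ℕ), _⟩ : Fin n) = b := rfl
      have eb : (⟨(b : ℕ) + 1, by omega⟩ : Fin n) = a := Fin.ext h1.symm
      rw [ea, eb]
      exact P.iseqv.symm hr
  
lemma toS_toP {n : ℕ} {S : Finset ℕ} (hS : S ∈ Sparse n) : toS (toP n S) = S := by
  ext p
  rw [mem_toS]
  constructor
  · rintro ⟨h1, h2, h3⟩
    rcases h3 with h | ⟨h4, h5⟩ | ⟨h4, h5⟩
    · have := congrArg Fin.val h
      simp only [Fin.val_mk] at this
      omega
    · rwa [spar_eq hS] at h5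
    · simp only [Fin.val_mk] at h4
      omega
  · intro hp
    have hp1 : p < n - 1 := (mem_Sparse.mp hS).1 p hp
    refine ⟨by omega, by omega, ?_⟩
    right; left
    exact ⟨rfl, by rwa [spar_eq hS]⟩

lemma blockset_toP {n : ℕ} {S : Finset ℕ} (hS : S ∈ Sparse n) (i : Fin n) :
    {j : ℕ | ∃ h : j < n, (toP n S).r ⟨j, h⟩ i} =
      {j : ℕ | j = (i : ℕ) ∨ (j + 1 = (i : ℕ) ∧ j ∈ S) ∨ ((i : ℕ) + 1 = j ∧ (i : ℕ) ∈ S)} := by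
  have hb := (mem_Sparse.mp hS).1
  ext j
  simp only [Set.mem_setOf_eq]
  constructor
  · rintro ⟨h, H⟩
    rcases H with H | ⟨h1, h2⟩ | ⟨h1, h2⟩
    · left; have := congrArg Fin.val H; simpa using this
    · right; left
      rw [spar_eq hS] at h2
      simp only [Fin.val_mk] at h1
      exact ⟨h1, h2⟩
    · right; right
      rw [spar_eq hS] at h2
      simp only [Fin.val_mk] at h1
      exact ⟨h1, h2⟩
  · rintro (rfl | ⟨h1, h2⟩ | ⟨rfl, h2⟩)
    · exact ⟨i.isLt, Or.inl (Fin.ext rfl)⟩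
    · have hj : j < n := by have := i.isLt; omega
      exact ⟨hj, Or.inr (Or.inl ⟨by simpa using h1, by rw [spar_eq hS]; simpa using h2⟩)⟩
    · have hj : (i : ℕ) + 1 < n := by have := hb _ h2; omega
      exact ⟨hj, Or.inr (Or.inr ⟨by simp, by rw [spar_eq hS]; exact h2⟩)⟩

lemma blockMin_toP {n : ℕ} {S : Finset ℕ} (hS : S ∈ Sparse n) (i : Fin n) :
    blockMin (toP n S) i =
      if ∃ p, p + 1 = (i : ℕ) ∧ p ∈ S then (i : ℕ) - 1 else (i : ℕ) := by
  have hsp := (mem_Sparse.mp hS).2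
  unfold blockMin
  rw [show {j : ℕ | ∃ h : j < n, (toP n S).r ⟨j, h⟩ i} = _ from blockset_toP hS i]
  split_ifs with h
  · obtain ⟨p, hp1, hp2⟩ := h
    have hiS : (i : ℕ) ∉ S := fun hi => hsp p hp2 (by rwa [hp1])
    apply le_antisymm
    · exact Nat.sInf_le (Or.inr (Or.inl ⟨by omega, by rwa [show (i:ℕ) - 1 = p by omega]⟩))
    · apply le_csInf ⟨(i : ℕ), Or.inl rfl⟩
      rintro b (rfl | ⟨h1, h2⟩ | ⟨h1, h2⟩) <;> omega
  · apply le_antisymm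
    · exact Nat.sInf_le (Or.inl rfl)
    · apply le_csInf ⟨(i : ℕ), Or.inl rfl⟩
      rintro b (rfl | ⟨h1, h2⟩ | ⟨h1, h2⟩)
      · omega
      · exact absurd ⟨b, h1, h2⟩ h
      · omega

lemma blockMax_toP {n : ℕ} {S : Finset ℕ} (hS : S ∈ Sparse n) (i : Fin n) :
    blockMax (toP n S) i =
      if ∃ p, p + 1 = (i : ℕ) ∧ p ∈ S then (i : ℕ)
      else if (i : ℕ) ∈ S then (i : ℕ) + 1 else (i : ℕ) := by
  have hsp := (mem_Sparse.mp hS).2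
  unfold blockMax
  rw [show {j : ℕ | ∃ h : j < n, (toP n S).r ⟨j, h⟩ i} = _ from blockset_toP hS i]
  have hbdd : BddAbove {j : ℕ | j = (i : ℕ) ∨ (j + 1 = (i : ℕ) ∧ j ∈ S) ∨
      ((i : ℕ) + 1 = j ∧ (i : ℕ) ∈ S)} := by
    refine ⟨(i : ℕ) + 1, ?_⟩
    rintro b (rfl | ⟨h1, h2⟩ | ⟨h1, h2⟩) <;> omega
  split_ifs with h h2
  · obtain ⟨p, hp1, hp2⟩ := h
    have hiS : (i : ℕ) ∉ S := fun hi => hsp p hp2 (by rwa [hp1])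
    apply le_antisymm
    · apply csSup_le ⟨(i : ℕ), Or.inl rfl⟩
      rintro b (rfl | ⟨h1, _⟩ | ⟨_, h1⟩) <;> first | omega | exact absurd h1 hiS
    · exact le_csSup hbdd (Or.inl rfl)
  · apply le_antisymm
    · apply csSup_le ⟨(i : ℕ), Or.inl rfl⟩
      rintro b (rfl | ⟨h1, h3⟩ | ⟨h1, h3⟩)
      · omega
      · exact absurd ⟨b, h1, h3⟩ h
      · omega
    · exact le_csSup hbdd (Or.inr (Or.inr ⟨rfl, h2⟩))
  · apply le_antisymm
    · apply csSup_le ⟨(i : ℕ), Or.inl rfl⟩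
      rintro b (rfl | ⟨h1, h3⟩ | ⟨h1, h3⟩)
      · omega
      · exact absurd ⟨b, h1, h3⟩ h
      · exact absurd h3 h2
    · exact le_csSup hbdd (Or.inl rfl)

lemma blockMin_eq_self_iff {n : ℕ} {S : Finset ℕ} (hS : S ∈ Sparse n) (i : Fin n) :
    blockMin (toP n S) i = (i : ℕ) ↔ ¬ ∃ p, p + 1 = (i : ℕ) ∧ p ∈ S := by
  rw [blockMin_toP hS]
  split_ifs with h
  · obtain ⟨p, hp1, hp2⟩ := h
    exact iff_of_false (by omega) (not_not_intro ⟨p, hp1, hp2⟩)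
  · exact iff_of_true rfl h

lemma card_filter_val_mem {n : ℕ} {S : Finset ℕ} (hS : S ∈ Sparse n) :
    (Finset.univ.filter fun i : Fin n => (i : ℕ) ∈ S).card = S.card := by
  apply Finset.card_bij (fun (i : Fin n) _ => (i : ℕ))
  · intro a ha; exact (Finset.mem_filter.mp ha).2
  · intro a _ b _ h; exact Fin.ext h
  · intro b hb
    have hb' : b < n := by have := (mem_Sparse.mp hS).1 b hb; omega
    exact ⟨⟨b, hb'⟩, Finset.mem_filter.mpr ⟨Finset.mem_univ _, hb⟩, rfl⟩

lemma spread_toP {n : ℕ} {S : Finset ℕ} (hS : S ∈ Sparse n) :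
    spread (toP n S) = S.card := by
  have hsp := (mem_Sparse.mp hS).2
  unfold spread
  have hterm : ∀ i : Fin n, i ∈ Finset.univ.filter
      (fun i : Fin n => blockMin (toP n S) i = (i : ℕ)) →
      blockMax (toP n S) i - (i : ℕ) = if (i : ℕ) ∈ S then 1 else 0 := by
    intro i hi
    have h := (blockMin_eq_self_iff hS i).mp (Finset.mem_filter.mp hi).2
    rw [blockMax_toP hS, if_neg h]
    split_ifs <;> omega
  rw [Finset.sum_congr rfl hterm, Finset.sum_boole, Finset.filter_filter]
  have heq : Finset.univ.filter (fun i : Fin n => blockMin (toP n S) i = (i : ℕ) ∧ (i : ℕ) ∈ S)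
      = Finset.univ.filter (fun i : Fin n => (i : ℕ) ∈ S) := by
    ext i
    simp only [Finset.mem_filter, Finset.mem_univ, true_and]
    constructor
    · tauto
    · intro hi
      refine ⟨(blockMin_eq_self_iff hS i).mpr ?_, hi⟩
      rintro ⟨p, hp1, hp2⟩
      exact hsp p hp2 (by rwa [hp1])
  rw [heq, card_filter_val_mem hS, Nat.cast_id]

lemma blockset_congr {n : ℕ} {P : SetPartition n} {i j : Fin n} (h : P.r i j) :
    {k : ℕ | ∃ hk : k < n, P.r ⟨k, hk⟩ i} = {k : ℕ | ∃ hk : k < n, P.r ⟨k, hk⟩ j} := by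
  ext k
  exact ⟨fun ⟨hk, hr⟩ => ⟨hk, P.iseqv.trans hr h⟩,
    fun ⟨hk, hr⟩ => ⟨hk, P.iseqv.trans hr (P.iseqv.symm h)⟩⟩

lemma blockMin_congr {n : ℕ} {P : SetPartition n} {i j : Fin n} (h : P.r i j) :
    blockMin P i = blockMin P j := by
  unfold blockMin; rw [blockset_congr h]

lemma self_mem_blockset {n : ℕ} (P : SetPartition n) (i : Fin n) :
    (i : ℕ) ∈ {k : ℕ | ∃ hk : k < n, P.r ⟨k, hk⟩ i} := ⟨i.isLt, P.iseqv.refl i⟩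

lemma blockNum_eq {n : ℕ} (P : SetPartition n) :
    blockNum P = (Finset.univ.filter fun i : Fin n => blockMin P i = (i : ℕ)).card := by
  unfold blockNum
  symm
  apply Finset.card_bij (fun (i : Fin n) _ => Quotient.mk P i)
  · intro a _
    exact Finset.mem_image.mpr ⟨a, Finset.mem_univ _, rfl⟩
  · intro a ha b hb hab
    have hr : P.r a b := Quotient.eq''.mp hab
    have := blockMin_congr hr
    have ha' := (Finset.mem_filter.mp ha).2
    have hb' := (Finset.mem_filter.mp hb).2
    exact Fin.ext (by omega)
  · intro b hb
    obtain ⟨i, _, rfl⟩ := Finset.mem_image.mp hb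
    have hne : {k : ℕ | ∃ hk : k < n, P.r ⟨k, hk⟩ i}.Nonempty := ⟨(i : ℕ), self_mem_blockset P i⟩
    have hmem := Nat.sInf_mem hne
    obtain ⟨hm, hrm⟩ := hmem
    refine ⟨⟨blockMin P i, hm⟩, Finset.mem_filter.mpr ⟨Finset.mem_univ _, ?_⟩, ?_⟩
    · have := blockMin_congr hrm
      simp only [Fin.val_mk]
      exact this
    · exact Quotient.sound hrm

lemma blockNum_toP {n : ℕ} {S : Finset ℕ} (hS : S ∈ Sparse n) :
    blockNum (toP n S) = n - S.card := by
  rw [blockNum_eq]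
  have h1 : (Finset.univ.filter fun i : Fin n => blockMin (toP n S) i = (i : ℕ))
      = Finset.univ.filter fun i : Fin n => ¬ ∃ p, p + 1 = (i : ℕ) ∧ p ∈ S := by
    ext i
    simp only [Finset.mem_filter, Finset.mem_univ, true_and]
    exact blockMin_eq_self_iff hS i
  have h2 : (Finset.univ.filter fun i : Fin n => ∃ p, p + 1 = (i : ℕ) ∧ p ∈ S).card
      = S.card := by
    symm
    apply Finset.card_bij (fun (p : ℕ) (hp : p ∈ S) =>
      (⟨p + 1, by have := (mem_Sparse.mp hS).1 p hp; omega⟩ : Fin n))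
    · intro p hp
      exact Finset.mem_filter.mpr ⟨Finset.mem_univ _, ⟨p, rfl, hp⟩⟩
    · intro a _ b _ h
      have := congrArg Fin.val h
      simp only [Fin.val_mk] at this
      omega
    · intro b hb
      obtain ⟨p, hp1, hp2⟩ := (Finset.mem_filter.mp hb).2
      exact ⟨p, hp2, Fin.ext (by simp [hp1])⟩
  have h3 := Finset.card_filter_add_card_filter_not
    (s := (Finset.univ : Finset (Fin n)))
    (p := fun i : Fin n => ∃ p, p + 1 = (i : ℕ) ∧ p ∈ S)
  rw [Finset.card_univ, Fintype.card_fin] at h3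
  rw [h1]
  omega

lemma card_Sparse_le {n : ℕ} {S : Finset ℕ} (hS : S ∈ Sparse n) : S.card ≤ n - 1 := by
  have : S ⊆ Finset.range (n - 1) := fun p hp =>
    Finset.mem_range.mpr ((mem_Sparse.mp hS).1 p hp)
  have := Finset.card_le_card this
  simpa using this

/-- the key reduction: SB2 as a sum over sparse sets. -/
lemma SB2_eq_sum (n : ℕ) (q t : ℚ) :
    SB2 n p13_2 p123 q t = ∑ S ∈ Sparse n, q ^ S.card * t ^ (n - S.card) := by
  unfold SB2
  apply Finset.sum_nbij' (i := fun P : SetPartition n => toS P) (j := fun S => toP n S)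
  · intro P hP
    exact toS_mem_Sparse (mem_class_iff.mp (Finset.mem_filter.mp hP).2)
  · intro S hS
    exact Finset.mem_filter.mpr ⟨Finset.mem_univ _, mem_class_iff.mpr (good_toP n S)⟩
  · intro P hP
    exact toP_toS (mem_class_iff.mp (Finset.mem_filter.mp hP).2)
  · intro S hS
    exact toS_toP hS
  · intro P hP
    have hG := mem_class_iff.mp (Finset.mem_filter.mp hP).2
    have hS := toS_mem_Sparse hG
    conv_lhs => rw [← toP_toS hG]
    rw [spread_toP hS, blockNum_toP hS]

lemma Sparse_small {n : ℕ} (hn : n ≤ 1) : Sparse n = {∅} := by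
  ext S
  simp only [mem_Sparse, Finset.mem_singleton]
  constructor
  · intro ⟨h1, _⟩
    apply Finset.eq_empty_iff_forall_notMem.mpr
    intro p hp
    have := h1 p hp
    omega
  · rintro rfl
    simp

lemma sum_Sparse_small (n : ℕ) (hn : n ≤ 1) (q t : ℚ) :
    ∑ S ∈ Sparse n, q ^ S.card * t ^ (n - S.card) = t ^ n := by
  rw [Sparse_small hn, Finset.sum_singleton]
  simp

lemma Sparse_filter_not {n : ℕ} (hn : 2 ≤ n) :
    (Sparse n).filter (fun S => n - 2 ∉ S) = Sparse (n - 1) := by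
  ext S
  simp only [Finset.mem_filter, mem_Sparse]
  constructor
  · rintro ⟨⟨h1, h2⟩, h3⟩
    refine ⟨fun p hp => ?_, h2⟩
    have := h1 p hp
    have : p ≠ n - 2 := fun h => h3 (h ▸ hp)
    omega
  · rintro ⟨h1, h2⟩
    refine ⟨⟨fun p hp => by have := h1 p hp; omega, h2⟩, fun h => by have := h1 _ h; omega⟩

lemma sum_Sparse_rec (n : ℕ) (hn : 2 ≤ n) (q t : ℚ) :
    ∑ S ∈ Sparse n, q ^ S.card * t ^ (n - S.card) =
      t * (∑ S ∈ Sparse (n - 1), q ^ S.card * t ^ (n - 1 - S.card)) +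
      q * t * (∑ S ∈ Sparse (n - 2), q ^ S.card * t ^ (n - 2 - S.card)) := by
  rw [← Finset.sum_filter_add_sum_filter_not (Sparse n) (fun S => n - 2 ∉ S)]
  congr 1
  · rw [Sparse_filter_not hn, Finset.mul_sum]
    apply Finset.sum_congr rfl
    intro S hS
    have hc : S.card ≤ n - 2 := by have := card_Sparse_le hS; omega
    have h1 : n - S.card = (n - 1 - S.card) + 1 := by omega
    rw [h1, pow_succ]
    ring
  · rw [Finset.mul_sum]
    apply Finset.sum_nbij' (i := fun S => S.erase (n - 2)) (j := fun S => insert (n - 2) S)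
    · intro S hS
      simp only [Finset.mem_filter, mem_Sparse, not_not] at hS
      obtain ⟨⟨h1, h2⟩, h3⟩ := hS
      rw [mem_Sparse]
      constructor
      · intro p hp
        obtain ⟨hp1, hp2⟩ := Finset.mem_erase.mp hp
        have ha := h1 p hp2
        have hb : p + 1 ≠ n - 2 := fun he => h2 p hp2 (he ▸ h3)
        omega
      · intro p hp
        exact fun h => h2 p (Finset.mem_erase.mp hp).2 (Finset.erase_subset _ _ h)
    · intro S hS
      rw [mem_Sparse] at hS
      obtain ⟨h1, h2⟩ := hS
      simp only [Finset.mem_filter, mem_Sparse, Finset.mem_insert, not_not]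
      refine ⟨⟨fun p hp => ?_, fun p hp => ?_⟩, Or.inl trivial⟩
      · rcases hp with rfl | hp'
        · omega
        · have := h1 p hp'; omega
      · rcases hp with rfl | hp'
        · intro hmem
          rcases hmem with h | h
          · omega
          · have := h1 _ h; omega
        · intro hmem
          rcases hmem with h | h
          · have := h1 _ hp'; omega
          · exact h2 p hp' h
    · intro S hS
      simp only [Finset.mem_filter, not_not] at hS
      exact Finset.insert_erase hS.2
    · intro S hS
      apply Finset.erase_insert
      intro hmem
      have := (mem_Sparse.mp hS).1 _ hmem
      omega
    · intro S hS
      simp only [Finset.mem_filter, mem_Sparse, not_not] at hS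
      obtain ⟨⟨h1, h2⟩, h3⟩ := hS
      have hc1 : 1 ≤ S.card := Finset.card_pos.mpr ⟨n - 2, h3⟩
      have hc2 : S.card ≤ n - 1 := by
        have : S ⊆ Finset.range (n - 1) := fun p hp => Finset.mem_range.mpr (h1 p hp)
        have := Finset.card_le_card this
        simpa using this
      rw [Finset.card_erase_of_mem h3]
      have e1 : S.card = (S.card - 1) + 1 := by omega
      have e2 : n - S.card = (n - 2 - (S.card - 1)) + 1 := by omega
      rw [e2, pow_succ, e1, pow_succ]
      rw [← e1]
      ring

lemma card_cast (n : ℕ) :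
    ((Finset.univ.filter
      (fun P : SetPartition n => SPAvoids P p13_2 ∧ SPAvoids P p123)).card : ℚ)
      = SB2 n p13_2 p123 1 1 := by
  unfold SB2
  rw [Finset.card_eq_sum_ones, Nat.cast_sum]
  apply Finset.sum_congr rfl
  intro P _
  simp

end SBAux

/-- the Fibonacci recursion for `G_n(q,t) = SB_n(13/2, 123; q,t)`, and
`|Π_n(13/2, 123)|` is the `n`-th Fibonacci number. -/
theorem SB2_13_2_123_fib :
    (∀ q t : ℚ, SB2 0 p13_2 p123 q t = 1) ∧
    (∀ q t : ℚ, SB2 1 p13_2 p123 q t = t) ∧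
    (∀ n : ℕ, 2 ≤ n → ∀ q t : ℚ,
      SB2 n p13_2 p123 q t =
        t * SB2 (n - 1) p13_2 p123 q t + q * t * SB2 (n - 2) p13_2 p123 q t) ∧
    (∀ n : ℕ,
      (Finset.univ.filter
        (fun P : SetPartition n => SPAvoids P p13_2 ∧ SPAvoids P p123)).card =
          Nat.fib (n + 1)) := by
  have h0 : ∀ q t : ℚ, SB2 0 p13_2 p123 q t = 1 := by
    intro q t
    rw [SBAux.SB2_eq_sum, SBAux.sum_Sparse_small 0 (by omega)]
    norm_num
  have h1 : ∀ q t : ℚ, SB2 1 p13_2 p123 q t = t := by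
    intro q t
    rw [SBAux.SB2_eq_sum, SBAux.sum_Sparse_small 1 (by omega)]
    norm_num
  have h2 : ∀ n : ℕ, 2 ≤ n → ∀ q t : ℚ,
      SB2 n p13_2 p123 q t =
        t * SB2 (n - 1) p13_2 p123 q t + q * t * SB2 (n - 2) p13_2 p123 q t := by
    intro n hn q t
    rw [SBAux.SB2_eq_sum, SBAux.SB2_eq_sum, SBAux.SB2_eq_sum, SBAux.sum_Sparse_rec n hn]
  refine ⟨h0, h1, h2, ?_⟩
  intro n
  induction n using Nat.strong_induction_on with
  | _ n ih =>
    match n, ih with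
    | 0, _ =>
      apply Nat.cast_injective (R := ℚ)
      rw [SBAux.card_cast 0, h0]
      norm_num
    | 1, _ =>
      apply Nat.cast_injective (R := ℚ)
      rw [SBAux.card_cast 1, h1]
      norm_num
    | (m + 2), ih =>
      have h2' := h2 (m + 2) (by omega) 1 1
      norm_num at h2'
      have e : ((Finset.univ.filter
          (fun P : SetPartition (m + 2) => SPAvoids P p13_2 ∧ SPAvoids P p123)).card : ℚ)
          = ((Finset.univ.filter
          (fun P : SetPartition (m + 1) => SPAvoids P p13_2 ∧ SPAvoids P p123)).card : ℚ)
          + ((Finset.univ.filter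
          (fun P : SetPartition m => SPAvoids P p13_2 ∧ SPAvoids P p123)).card : ℚ) := by
        rw [SBAux.card_cast, SBAux.card_cast, SBAux.card_cast, h2']
      have e' : (Finset.univ.filter
          (fun P : SetPartition (m + 2) => SPAvoids P p13_2 ∧ SPAvoids P p123)).card
          = (Finset.univ.filter
          (fun P : SetPartition (m + 1) => SPAvoids P p13_2 ∧ SPAvoids P p123)).card
          + (Finset.univ.filter
          (fun P : SetPartition m => SPAvoids P p13_2 ∧ SPAvoids P p123)).card := by
        exact_mod_cast e
      rw [e']
      have i1 := ih (m + 1) (by omega)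
      have i2 := ih m (by omega)
      rw [i1, i2]
      have e1 : Nat.fib (m + 1 + 1) = Nat.fib m + Nat.fib (m + 1) := Nat.fib_add_two
      have e2 : Nat.fib (m + 2 + 1) = Nat.fib (m + 1) + Nat.fib (m + 1 + 1) := Nat.fib_add_two
      omega

end
end

section
/- Under the composed bijection T between noncrossing partitions of [n] and 321-avoiding permutations of [n] (via ballot pairs), for every noncrossing partition with RGF w: spread(w) = inv(T(w)) and block(w) = LRM(T(w)), where inv counts inversions and LRM counts left-to-right maxima. -/
open scoped Classical
noncomputable section

/-- A list of naturals is a restricted growth function. -/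
def IsRGFL (w : List ℕ) : Prop :=
  ∀ i : ℕ, i < w.length → 1 ≤ w.getD i 0 ∧ w.getD i 0 ≤ (w.take i).foldr max 0 + 1

/-- The largest letter of a word. -/
def maxLetterL (w : List ℕ) : ℕ := w.foldr max 0

/-- The (0-based) index of the first occurrence of the letter `l`. -/
def firstIdxL (w : List ℕ) (l : ℕ) : ℕ := sInf {i : ℕ | i < w.length ∧ w.getD i 0 = l}

/-- The (0-based) index of the last occurrence of the letter `l`. -/
def lastIdxL (w : List ℕ) (l : ℕ) : ℕ := sSup {i : ℕ | i < w.length ∧ w.getD i 0 = l}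

/-- The spread of a word. -/
def spreadL (w : List ℕ) : ℕ :=
  ∑ l ∈ Finset.Icc 1 (maxLetterL w), (lastIdxL w l - firstIdxL w l)

/-- A word avoids the subword pattern `1212`. -/
def Avoids1212L (w : List ℕ) : Prop :=
  ¬ ∃ i j k l : ℕ, i < j ∧ j < k ∧ k < l ∧ l < w.length ∧
      w.getD i 0 = w.getD k 0 ∧ w.getD j 0 = w.getD l 0 ∧ w.getD i 0 ≠ w.getD j 0

/-- The indicator word of first occurrences of letters in `w`. -/
def firstsOf (w : List ℕ) : List Bool :=
  List.ofFn fun i : Fin w.length =>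
    if ∀ j : ℕ, j < (i : ℕ) → w.getD j 0 ≠ w.getD (i : ℕ) 0 then true else false

/-- The indicator word of last occurrences of letters in `w`. -/
def lastsOf (w : List ℕ) : List Bool :=
  List.ofFn fun i : Fin w.length =>
    if ∀ j : ℕ, (i : ℕ) < j → j < w.length → w.getD j 0 ≠ w.getD (i : ℕ) 0 then true
    else false

/-- A ballot pair: two binary words of the same length with equally many 1s, such that
for `1 ≤ i ≤ n-1` the number of 1s among the first `i` letters of `p` strictly exceeds
the number of 1s among the first `i-1` letters of `v`. -/
def IsBallotPair (p v : List Bool) : Prop :=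
  p.length = v.length ∧ p.count true = v.count true ∧
    ∀ i : ℕ, 1 ≤ i → i ≤ p.length - 1 →
      (v.take (i - 1)).count true < (p.take i).count true

/-- `i` is a left-to-right maximum of the permutation `π`. -/
def IsLRM {n : ℕ} (π : Equiv.Perm (Fin n)) (i : Fin n) : Prop :=
  ∀ j : Fin n, j < i → π j < π i

/-- The number of left-to-right maxima of `π`. -/
def lrmStat {n : ℕ} (π : Equiv.Perm (Fin n)) : ℕ :=
  (Finset.univ.filter (fun i : Fin n => IsLRM π i)).card

/-- The number of inversions of `π`. -/
def invStat {n : ℕ} (π : Equiv.Perm (Fin n)) : ℕ :=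
  (Finset.univ.filter (fun p : Fin n × Fin n => p.1 < p.2 ∧ π p.2 < π p.1)).card

/-- The number of fixed points of `π`. -/
def fixStat {n : ℕ} (π : Equiv.Perm (Fin n)) : ℕ :=
  (Finset.univ.filter (fun i : Fin n => π i = i)).card

/-- `π` avoids the pattern `321`: no decreasing subsequence of length 3. -/
def Av321 {n : ℕ} (π : Equiv.Perm (Fin n)) : Prop :=
  ¬ ∃ i j k : Fin n, i < j ∧ j < k ∧ π k < π j ∧ π j < π i

/-- The indicator word of positions of left-to-right maxima of `π`. -/
def posOf {n : ℕ} (π : Equiv.Perm (Fin n)) : List Bool :=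
  List.ofFn fun i : Fin n => if IsLRM π i then true else false

/-- The indicator word of values of left-to-right maxima of `π`. -/
def valOf {n : ℕ} (π : Equiv.Perm (Fin n)) : List Bool :=
  List.ofFn fun i : Fin n => if ∃ j : Fin n, IsLRM π j ∧ π j = i then true else false


section Aux
variable (w : List ℕ)

lemma foldr_max_eq (l : List ℕ) (a : ℕ) : l.foldr max a = max a (l.foldr max 0) := by
  induction l with
  | nil => simp
  | cons x xs ih => simp [List.foldr, ih]; omega

lemma foldr_max_append (l t : List ℕ) :
    (l ++ t).foldr max 0 = max (l.foldr max 0) (t.foldr max 0) := by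
  rw [List.foldr_append, foldr_max_eq]
  exact max_comm _ _

lemma take_succ_eq (i : ℕ) (h : i < w.length) :
    w.take (i+1) = w.take i ++ [w.getD i 0] := by
  rw [List.take_succ, List.getD_eq_getElem _ _ h, List.getElem?_eq_getElem h]
  rfl

lemma prefmax_succ (i : ℕ) (h : i < w.length) :
    (w.take (i+1)).foldr max 0 = max ((w.take i).foldr max 0) (w.getD i 0) := by
  rw [take_succ_eq w i h, foldr_max_append]
  simp

lemma prefmax_mono {i j : ℕ} (hij : i ≤ j) :
    (w.take i).foldr max 0 ≤ (w.take j).foldr max 0 := by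
  have h1 : (w.take j).take i = w.take i := by
    rw [List.take_take, min_eq_left hij]
  have h2 : w.take j = w.take i ++ (w.take j).drop i := by
    conv_lhs => rw [← List.take_append_drop i (w.take j)]
    rw [h1]
  rw [h2, foldr_max_append]
  exact le_max_left _ _

lemma maxLetter_eq_prefmax : maxLetterL w = (w.take w.length).foldr max 0 := by
  rw [List.take_length]; rfl

lemma getD_le_maxLetter {i : ℕ} (h : i < w.length) : w.getD i 0 ≤ maxLetterL w := by
  rw [maxLetter_eq_prefmax]
  calc w.getD i 0 ≤ (w.take (i+1)).foldr max 0 := by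
        rw [prefmax_succ w i h]; exact le_max_right _ _
    _ ≤ _ := prefmax_mono w h

lemma rgf_surj_aux (hrgf : IsRGFL w) (i : ℕ) :
    ∀ l, 1 ≤ l → l ≤ (w.take i).foldr max 0 → ∃ j, j < i ∧ j < w.length ∧ w.getD j 0 = l := by
  induction i with
  | zero => intro l h1 h2; simp at h2; omega
  | succ k ih =>
    intro l h1 h2
    rcases Nat.lt_or_ge k w.length with hk | hk
    · rw [prefmax_succ w k hk] at h2
      rcases le_or_gt l ((w.take k).foldr max 0) with h3 | h3
      · obtain ⟨j, hj1, hj2, hj3⟩ := ih l h1 h3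
        exact ⟨j, by omega, hj2, hj3⟩
      · have hb := (hrgf k hk).2
        have : w.getD k 0 = l := by omega
        exact ⟨k, by omega, hk, this⟩
    · rw [List.take_of_length_le (by omega : w.length ≤ k + 1),
        ← List.take_of_length_le (le_refl w.length), ← maxLetter_eq_prefmax] at h2
      have h3 : l ≤ (w.take k).foldr max 0 := by
        rw [List.take_of_length_le hk, ← List.take_of_length_le (le_refl w.length),
          ← maxLetter_eq_prefmax]
        exact h2
      obtain ⟨j, hj1, hj2, hj3⟩ := ih l h1 h3
      exact ⟨j, by omega, hj2, hj3⟩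

lemma rgf_surj (hrgf : IsRGFL w) {l : ℕ} (h1 : 1 ≤ l) (h2 : l ≤ maxLetterL w) :
    ∃ j, j < w.length ∧ w.getD j 0 = l := by
  rw [maxLetter_eq_prefmax] at h2
  obtain ⟨j, _, hj2, hj3⟩ := rgf_surj_aux w hrgf w.length l h1 h2
  exact ⟨j, hj2, hj3⟩

-- occurrence set facts
variable {l : ℕ} (hocc : ∃ j, j < w.length ∧ w.getD j 0 = l)

lemma occ_bdd : BddAbove {i : ℕ | i < w.length ∧ w.getD i 0 = l} :=
  ⟨w.length, fun x hx => le_of_lt hx.1⟩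

include hocc

lemma first_mem : firstIdxL w l < w.length ∧ w.getD (firstIdxL w l) 0 = l :=
  Nat.sInf_mem hocc

lemma last_mem : lastIdxL w l < w.length ∧ w.getD (lastIdxL w l) 0 = l :=
  Nat.sSup_mem hocc (occ_bdd w)

lemma first_le_last : firstIdxL w l ≤ lastIdxL w l :=
  Nat.sInf_le (last_mem w hocc)

lemma first_spec : ∀ j, j < firstIdxL w l → w.getD j 0 ≠ l := by
  intro j hj heq
  have h2 : firstIdxL w l ≤ j := Nat.sInf_le ⟨lt_trans hj (first_mem w hocc).1, heq⟩
  omega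

lemma last_spec : ∀ j, lastIdxL w l < j → j < w.length → w.getD j 0 ≠ l := by
  intro j hj hjl heq
  have h2 : j ≤ lastIdxL w l :=
    le_csSup (occ_bdd w) (show j ∈ {i : ℕ | i < w.length ∧ w.getD i 0 = l} from ⟨hjl, heq⟩)
  omega

omit hocc

lemma first_eq_of {i : ℕ} (hi : i < w.length) (hv : w.getD i 0 = l)
    (hmin : ∀ j, j < i → w.getD j 0 ≠ w.getD i 0) : firstIdxL w l = i := by
  have hocc : ∃ j, j < w.length ∧ w.getD j 0 = l := ⟨i, hi, hv⟩
  have h1 : firstIdxL w l ≤ i := Nat.sInf_le ⟨hi, hv⟩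
  have h2 := first_mem w hocc
  rcases Nat.lt_or_ge (firstIdxL w l) i with h | h
  · exact absurd (h2.2.trans hv.symm) (hmin _ h)
  · omega

lemma last_eq_of {i : ℕ} (hi : i < w.length) (hv : w.getD i 0 = l)
    (hmax : ∀ j, i < j → j < w.length → w.getD j 0 ≠ w.getD i 0) : lastIdxL w l = i := by
  have hocc : ∃ j, j < w.length ∧ w.getD j 0 = l := ⟨i, hi, hv⟩
  have h1 : i ≤ lastIdxL w l :=
    le_csSup (occ_bdd w) (show i ∈ {i : ℕ | i < w.length ∧ w.getD i 0 = l} from ⟨hi, hv⟩)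
  have h2 := last_mem w hocc
  rcases Nat.lt_or_ge i (lastIdxL w l) with h | h
  · exact absurd (h2.2.trans hv.symm) (hmax _ h h2.1)
  · omega

end Aux

section Perm
variable {n : ℕ} (π : Equiv.Perm (Fin n))

lemma lrm_decomp {i : Fin n} (h : IsLRM π i) :
    (Finset.univ.filter (fun j => i < j ∧ π j < π i)).card = (π i : ℕ) - (i : ℕ)
      ∧ (i : ℕ) ≤ (π i : ℕ) := by
  have hA : (Finset.univ.filter (fun j => π j < π i)).card = (π i : ℕ) := by
    rw [show Finset.univ.filter (fun j => π j < π i) = (Finset.Iio (π i)).image π.symm by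
      ext j
      simp only [Finset.mem_filter, Finset.mem_univ, true_and, Finset.mem_image,
        Finset.mem_Iio]
      constructor
      · intro hj; exact ⟨π j, hj, π.symm_apply_apply j⟩
      · rintro ⟨v, hv, rfl⟩; rwa [π.apply_symm_apply]]
    rw [Finset.card_image_of_injective _ π.symm.injective, Fin.card_Iio]
  have hB : (Finset.univ.filter (fun j => j < i)).card = (i : ℕ) := by
    rw [show Finset.univ.filter (fun j => j < i) = Finset.Iio i by ext j; simp, Fin.card_Iio]
  have hsplit : Finset.univ.filter (fun j => π j < π i) =
      Finset.univ.filter (fun j => j < i) ∪ Finset.univ.filter (fun j => i < j ∧ π j < π i) := by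
    ext j
    simp only [Finset.mem_filter, Finset.mem_univ, true_and, Finset.mem_union]
    constructor
    · intro hj
      rcases lt_trichotomy j i with h' | h' | h'
      · exact Or.inl h'
      · exact absurd (h' ▸ hj) (lt_irrefl _)
      · exact Or.inr ⟨h', hj⟩
    · rintro (h' | ⟨_, h2⟩)
      · exact h j h'
      · exact h2
  have hdisj : Disjoint (Finset.univ.filter (fun j => j < i))
      (Finset.univ.filter (fun j => i < j ∧ π j < π i)) := by
    rw [Finset.disjoint_left]
    intro a ha hb
    simp only [Finset.mem_filter] at ha hb
    exact absurd (lt_trans ha.2 hb.2.1) (lt_irrefl _)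
  rw [hsplit, Finset.card_union_of_disjoint hdisj, hB] at hA
  omega

lemma inv_eq_sum (hav : Av321 π) :
    invStat π = ∑ i ∈ Finset.univ.filter (fun i => IsLRM π i), ((π i : ℕ) - (i : ℕ)) := by
  have h1 : invStat π =
      ∑ i : Fin n, (Finset.univ.filter (fun j => i < j ∧ π j < π i)).card := by
    unfold invStat
    rw [Finset.card_eq_sum_card_fiberwise (f := Prod.fst) (t := Finset.univ)
      (fun x _ => Finset.mem_univ _)]
    apply Finset.sum_congr rfl
    intro i _
    apply Finset.card_bij' (fun p _ => p.2) (fun j _ => (i, j))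
    case hi =>
      intro a ha
      simp only [Finset.mem_filter, Finset.mem_univ, true_and] at ha ⊢
      obtain ⟨⟨ha1, ha2⟩, ha3⟩ := ha
      rw [← ha3]
      exact ⟨ha1, ha2⟩
    case hj =>
      intro a ha
      simp only [Finset.mem_filter, Finset.mem_univ, true_and] at ha ⊢
      exact ⟨ha, trivial⟩
    case left_inv =>
      intro a ha
      simp only [Finset.mem_filter, Finset.mem_univ, true_and] at ha
      rw [← ha.2]
    case right_inv =>
      intro a _
      rfl
  rw [h1, ← Finset.sum_filter_add_sum_filter_not Finset.univ (fun i => IsLRM π i)]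
  have h0 : ∑ i ∈ Finset.univ.filter (fun i => ¬ IsLRM π i),
      (Finset.univ.filter (fun j => i < j ∧ π j < π i)).card = 0 := by
    apply Finset.sum_eq_zero
    intro i hi
    simp only [Finset.mem_filter, Finset.mem_univ, true_and] at hi
    rw [Finset.card_eq_zero]
    by_contra hne
    obtain ⟨j, hj⟩ := Finset.nonempty_of_ne_empty hne
    simp only [Finset.mem_filter, Finset.mem_univ, true_and] at hj
    unfold IsLRM at hi
    push_neg at hi
    obtain ⟨k, hk1, hk2⟩ := hi
    have hne2 : π i ≠ π k := fun he => (ne_of_gt hk1) (π.injective he)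
    have : π i < π k := lt_of_le_of_ne hk2 hne2
    exact hav ⟨k, i, j, hk1, hj.1, hj.2, this⟩
  rw [h0, add_zero]
  exact Finset.sum_congr rfl (fun i hi => (lrm_decomp π (Finset.mem_filter.mp hi).2).1)

lemma sum_sub_nat {α : Type*} (s : Finset α) (f g : α → ℕ) (h : ∀ i ∈ s, g i ≤ f i) :
    ∑ i ∈ s, (f i - g i) = ∑ i ∈ s, f i - ∑ i ∈ s, g i := by
  have h2 : ∑ i ∈ s, f i = ∑ i ∈ s, (f i - g i) + ∑ i ∈ s, g i := by
    rw [← Finset.sum_add_distrib]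
    exact Finset.sum_congr rfl (fun i hi => by have := h i hi; omega)
  omega

end Perm

/-- if a 321-avoiding permutation `π` corresponds to a noncrossing RGF `w`
under the ballot-pair encoding (positions/values of LRM matching firsts/lasts of `w`),
then `spread(w) = inv(π)` and `block(w) = LRM(π)`. -/
theorem spread_block_eq_inv_lrm (n : ℕ) (w : List ℕ) (hlen : w.length = n)
    (hrgf : IsRGFL w) (hnc : Avoids1212L w) (π : Equiv.Perm (Fin n)) (hav : Av321 π)
    (hpos : posOf π = firstsOf w) (hval : valOf π = lastsOf w) :
    spreadL w = invStat π ∧ maxLetterL w = lrmStat π := by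
  subst hlen
  unfold posOf firstsOf at hpos
  unfold valOf lastsOf at hval
  have hP : ∀ i : Fin w.length, IsLRM π i ↔
      (∀ j, j < (i : ℕ) → w.getD j 0 ≠ w.getD (i : ℕ) 0) := by
    intro i
    have hthis := congrFun (List.ofFn_inj.mp hpos) i
    by_cases hA : IsLRM π i <;>
      by_cases hB : (∀ j, j < (i : ℕ) → w.getD j 0 ≠ w.getD (i : ℕ) 0) <;>
      simp [hA, hB] at hthis ⊢ <;> exact hthis
  have hV : ∀ i : Fin w.length, (∃ j, IsLRM π j ∧ π j = i) ↔
      (∀ j, (i : ℕ) < j → j < w.length → w.getD j 0 ≠ w.getD (i : ℕ) 0) := by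
    intro i
    have hthis := congrFun (List.ofFn_inj.mp hval) i
    by_cases hA : (∃ j, IsLRM π j ∧ π j = i) <;>
      by_cases hB : (∀ j, (i : ℕ) < j → j < w.length → w.getD j 0 ≠ w.getD (i : ℕ) 0) <;>
      simp [hA, hB] at hthis ⊢ <;> exact hthis
  set Ffin := (Finset.range w.length).filter
    (fun a => ∀ j, j < a → w.getD j 0 ≠ w.getD a 0) with hFdef
  set Lfin := (Finset.range w.length).filter
    (fun a => ∀ j, a < j → j < w.length → w.getD j 0 ≠ w.getD a 0) with hLdef
  set LRMfin := Finset.univ.filter (fun i => IsLRM π i) with hLRMdef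
  have memF : ∀ a, a ∈ Ffin ↔ a < w.length ∧ ∀ j, j < a → w.getD j 0 ≠ w.getD a 0 := by
    intro a; rw [hFdef]; simp [Finset.mem_filter, Finset.mem_range]
  have memL : ∀ a, a ∈ Lfin ↔ a < w.length ∧
      ∀ j, a < j → j < w.length → w.getD j 0 ≠ w.getD a 0 := by
    intro a; rw [hLdef]; simp [Finset.mem_filter, Finset.mem_range]
  have memLRM : ∀ i, i ∈ LRMfin ↔ IsLRM π i := by
    intro i; rw [hLRMdef]; simp [Finset.mem_filter]
  -- sum/card transfers perm side
  have S1 : ∑ i ∈ LRMfin, ((i : ℕ)) = ∑ a ∈ Ffin, a := by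
    apply Finset.sum_bij (fun (i : Fin w.length) _ => (i : ℕ))
    · intro i hi
      exact (memF _).mpr ⟨i.isLt, (hP i).mp ((memLRM i).mp hi)⟩
    · intro i _ j _ hij
      exact Fin.val_injective hij
    · intro a ha
      obtain ⟨h1, h2⟩ := (memF a).mp ha
      exact ⟨⟨a, h1⟩, (memLRM _).mpr ((hP ⟨a, h1⟩).mpr h2), rfl⟩
    · intro i _; rfl
  have C1 : LRMfin.card = Ffin.card := by
    apply Finset.card_bij (fun (i : Fin w.length) _ => (i : ℕ))
    · intro i hi
      exact (memF _).mpr ⟨i.isLt, (hP i).mp ((memLRM i).mp hi)⟩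
    · intro i _ j _ hij
      exact Fin.val_injective hij
    · intro a ha
      obtain ⟨h1, h2⟩ := (memF a).mp ha
      exact ⟨⟨a, h1⟩, (memLRM _).mpr ((hP ⟨a, h1⟩).mpr h2), rfl⟩
  have S2 : ∑ i ∈ LRMfin, ((π i : ℕ)) = ∑ a ∈ Lfin, a := by
    apply Finset.sum_bij (fun (i : Fin w.length) _ => ((π i : ℕ)))
    · intro i hi
      exact (memL _).mpr ⟨(π i).isLt, (hV (π i)).mp ⟨i, (memLRM i).mp hi, rfl⟩⟩
    · intro i _ j _ hij
      exact π.injective (Fin.val_injective hij)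
    · intro a ha
      obtain ⟨h1, h2⟩ := (memL a).mp ha
      obtain ⟨j, hj1, hj2⟩ := (hV ⟨a, h1⟩).mpr h2
      exact ⟨j, (memLRM j).mpr hj1, by rw [hj2]⟩
    · intro i _; rfl
  -- word side transfers
  have hocc : ∀ l ∈ Finset.Icc 1 (maxLetterL w), ∃ j, j < w.length ∧ w.getD j 0 = l := by
    intro l hl
    rw [Finset.mem_Icc] at hl
    exact rgf_surj w hrgf hl.1 hl.2
  have SumFirst : ∑ l ∈ Finset.Icc 1 (maxLetterL w), firstIdxL w l = ∑ a ∈ Ffin, a := by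
    apply Finset.sum_bij (fun l _ => firstIdxL w l)
    · intro l hl
      have ho := hocc l hl
      have fm := first_mem w ho
      refine (memF _).mpr ⟨fm.1, fun j hj => ?_⟩
      rw [fm.2]
      exact first_spec w ho j hj
    · intro l1 hl1 l2 hl2 he
      have f1 := first_mem w (hocc l1 hl1)
      have f2 := first_mem w (hocc l2 hl2)
      rw [← f1.2, ← f2.2, he]
    · intro a ha
      obtain ⟨h1, h2⟩ := (memF a).mp ha
      refine ⟨w.getD a 0, ?_, first_eq_of w h1 rfl h2⟩
      rw [Finset.mem_Icc]
      exact ⟨(hrgf a h1).1, getD_le_maxLetter w h1⟩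
    · intro l _; rfl
  have CardF : maxLetterL w = Ffin.card := by
    have : (Finset.Icc 1 (maxLetterL w)).card = maxLetterL w := by
      rw [Nat.card_Icc]; omega
    rw [← this]
    apply Finset.card_bij (fun l _ => firstIdxL w l)
    · intro l hl
      have ho := hocc l hl
      have fm := first_mem w ho
      refine (memF _).mpr ⟨fm.1, fun j hj => ?_⟩
      rw [fm.2]
      exact first_spec w ho j hj
    · intro l1 hl1 l2 hl2 he
      have f1 := first_mem w (hocc l1 hl1)
      have f2 := first_mem w (hocc l2 hl2)
      rw [← f1.2, ← f2.2, he]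
    · intro a ha
      obtain ⟨h1, h2⟩ := (memF a).mp ha
      refine ⟨w.getD a 0, ?_, first_eq_of w h1 rfl h2⟩
      rw [Finset.mem_Icc]
      exact ⟨(hrgf a h1).1, getD_le_maxLetter w h1⟩
  have SumLast : ∑ l ∈ Finset.Icc 1 (maxLetterL w), lastIdxL w l = ∑ a ∈ Lfin, a := by
    apply Finset.sum_bij (fun l _ => lastIdxL w l)
    · intro l hl
      have ho := hocc l hl
      have fm := last_mem w ho
      refine (memL _).mpr ⟨fm.1, fun j hj1 hj2 => ?_⟩
      rw [fm.2]
      exact last_spec w ho j hj1 hj2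
    · intro l1 hl1 l2 hl2 he
      have f1 := last_mem w (hocc l1 hl1)
      have f2 := last_mem w (hocc l2 hl2)
      rw [← f1.2, ← f2.2, he]
    · intro a ha
      obtain ⟨h1, h2⟩ := (memL a).mp ha
      refine ⟨w.getD a 0, ?_, last_eq_of w h1 rfl h2⟩
      rw [Finset.mem_Icc]
      exact ⟨(hrgf a h1).1, getD_le_maxLetter w h1⟩
    · intro l _; rfl
  constructor
  · -- spread = inv
    have e1 : spreadL w = ∑ a ∈ Lfin, a - ∑ a ∈ Ffin, a := by
      unfold spreadL
      rw [sum_sub_nat _ _ _ (fun l hl => first_le_last w (hocc l hl)), SumFirst, SumLast]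
    have e2 : invStat π = ∑ a ∈ Lfin, a - ∑ a ∈ Ffin, a := by
      rw [inv_eq_sum π hav, ← hLRMdef,
        sum_sub_nat _ _ _ (fun i hi => (lrm_decomp π ((memLRM i).mp hi)).2), S1, S2]
    rw [e1, e2]
  · -- block = lrm
    unfold lrmStat
    rw [CardF, ← hLRMdef, C1]


end
end
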